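/- For all positive integers n and m, s_{n,m} ⪯ s_{n+1,m} and s_{n,m} ⪯ s_{n,m+1}. -/

import Mathlib

open Classical

/-- A slope is an element of `ℚ ∪ {∞}`; `none` denotes `∞`. -/
abbrev Slope := Option ℚ

/-- The clue of `f` along the line of slope `s` (vertical line `x = c` when `s = ∞ = none`,
and the line `y = r·x + c` when `s = some r`), with respect to the grid
`I_{n,m} = {1,…,n} × {1,…,m} ⊆ ℤ²`: the sum of `f` over the grid points lying on the line. -/
noncomputable def clueSum (n m : ℕ) (s : Slope) (c : ℝ) (f : ℤ × ℤ → ℝ) : ℝ :=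
  ∑ p ∈ (Finset.Icc (1 : ℤ) n ×ˢ Finset.Icc (1 : ℤ) m).filter
      (fun p => match s with
        | none => (p.1 : ℝ) = c
        | some r => (p.2 : ℝ) = (r : ℝ) * (p.1 : ℝ) + c),
    f p

/-- `f` and `g` are `T`-clue-equivalent on `I_{n,m}`: for every slope `s ∈ T` and every line
of slope `s`, the clues of `f` and `g` along that line agree. -/
def ClueEquiv (n m : ℕ) (T : Set Slope) (f g : ℤ × ℤ → ℝ) : Prop :=
  ∀ s ∈ T, ∀ c : ℝ, clueSum n m s c f = clueSum n m s c g

/-- The entry `p ∈ I_{n,m}` is uniquely solvable with respect to the slope set `T`. -/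
def UniqSolv (n m : ℕ) (T : Set Slope) (p : ℤ × ℤ) : Prop :=
  ∀ f g : ℤ × ℤ → ℝ, ClueEquiv n m T f g → f p = g p

/-- The enumeration `σ` of the slope set `S = ℤ ∪ {1/k : k ≠ 0} ∪ {∞}` realizing the order
`0 ≺ ∞ ≺ −1 ≺ 1 ≺ −1/2 ≺ −2 ≺ 1/2 ≺ 2 ≺ −1/3 ≺ −3 ≺ 1/3 ≺ 3 ≺ ⋯`:
`σ 0 = 0`, `σ 1 = ∞`, `σ 2 = −1`, `σ 3 = 1`, and for `q ≥ 2`,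
`σ (4q−4) = −1/q`, `σ (4q−3) = −q`, `σ (4q−2) = 1/q`, `σ (4q−1) = q`. -/
def sigmaSlope : ℕ → Slope
  | 0 => some 0
  | 1 => none
  | 2 => some (-1)
  | 3 => some 1
  | (a + 4) =>
    let q : ℚ := ((a / 4 + 2 : ℕ) : ℚ)
    match a % 4 with
    | 0 => some (-(1 / q))
    | 1 => some (-q)
    | 2 => some (1 / q)
    | _ => some q

/-- `C_{σ(a)} = {t ∈ S : t ⪯ σ(a)}`, the set of the first `a + 1` slopes. -/
def CSet (a : ℕ) : Set Slope := sigmaSlope '' Set.Iic a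

/-- Either every entry of the first row or every entry of the last row of `I_{n,m}` is
uniquely solvable with respect to `C_{σ(a)}`. -/
def RowOK (n m a : ℕ) : Prop :=
  (∀ i : ℤ, 1 ≤ i → i ≤ (n : ℤ) → UniqSolv n m (CSet a) (i, 1)) ∨
  (∀ i : ℤ, 1 ≤ i → i ≤ (n : ℤ) → UniqSolv n m (CSet a) (i, (m : ℤ)))

/-- Either every entry of the first column or every entry of the last column of `I_{n,m}` is
uniquely solvable with respect to `C_{σ(a)}`. -/
def ColOK (n m a : ℕ) : Prop :=
  (∀ j : ℤ, 1 ≤ j → j ≤ (m : ℤ) → UniqSolv n m (CSet a) (1, j)) ∨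
  (∀ j : ℤ, 1 ≤ j → j ≤ (m : ℤ) → UniqSolv n m (CSet a) ((n : ℤ), j))

/-- The index (in the enumeration `σ`) of the invariant `r_{n,m}`: the ⪯-least `s ∈ S` such
that either the first or the last row of `I_{n,m}` is uniquely solvable w.r.t. `C_s`. -/
noncomputable def rInv (n m : ℕ) : ℕ := sInf {a | RowOK n m a}

/-- The index of the invariant `c_{n,m}`: the ⪯-least `s ∈ S` such that either the first or
the last column of `I_{n,m}` is uniquely solvable w.r.t. `C_s`. -/
noncomputable def cInv (n m : ℕ) : ℕ := sInf {a | ColOK n m a}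

/-- The index of the invariant `s_{n,m} = min{r_{n,m}, c_{n,m}}`. -/
noncomputable def sInv (n m : ℕ) : ℕ := min (rInv n m) (cInv n m)

/-- The index of the invariant `k_{n,m}`: the ⪯-least `s ∈ S` such that every entry of
`I_{n,m}` is uniquely solvable w.r.t. `C_s`. -/
noncomputable def kInv (n m : ℕ) : ℕ :=
  sInf {a | ∀ p : ℤ × ℤ, 1 ≤ p.1 → p.1 ≤ (n : ℤ) → 1 ≤ p.2 → p.2 ≤ (m : ℤ) →
    UniqSolv n m (CSet a) p}

/-- The index of the invariant `b_{n,m}`: the ⪯-least `s ∈ S` such that every entry of the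
border `B_{n,m} = ({1,n} × I_m) ∪ (I_n × {1,m})` is uniquely solvable w.r.t. `C_s`. -/
noncomputable def bInv (n m : ℕ) : ℕ :=
  sInf {a | ∀ p : ℤ × ℤ, 1 ≤ p.1 → p.1 ≤ (n : ℤ) → 1 ≤ p.2 → p.2 ≤ (m : ℤ) →
    (p.1 = 1 ∨ p.1 = (n : ℤ) ∨ p.2 = 1 ∨ p.2 = (m : ℤ)) →
    UniqSolv n m (CSet a) p}

/-! ### Auxiliary machinery -/

/-- Negation of a slope (reflection symmetry). -/
def negS : Slope → Slope := Option.map (fun r => -r)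

lemma negS_negS (s : Slope) : negS (negS s) = s := by
  cases s <;> simp [negS]

lemma negS_image_image (T : Set Slope) : negS '' (negS '' T) = T := by
  rw [← Set.image_comp]
  have : negS ∘ negS = id := funext negS_negS
  rw [this, Set.image_id]

/-- The line-membership predicate used in `clueSum`. -/
def lineP (s : Slope) (c : ℝ) : ℤ × ℤ → Prop := fun p => match s with
  | none => (p.1 : ℝ) = c
  | some r => (p.2 : ℝ) = (r : ℝ) * (p.1 : ℝ) + c

lemma clueSum_eq (n m : ℕ) (s : Slope) (c : ℝ) (f : ℤ × ℤ → ℝ) :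
    clueSum n m s c f =
      ∑ p ∈ (Finset.Icc (1 : ℤ) n ×ˢ Finset.Icc (1 : ℤ) m).filter (lineP s c), f p := by
  cases s <;> rfl

lemma lineP_none (c : ℝ) (p : ℤ × ℤ) : lineP none c p ↔ (p.1 : ℝ) = c := Iff.rfl

lemma lineP_some (r : ℚ) (c : ℝ) (p : ℤ × ℤ) :
    lineP (some r) c p ↔ (p.2 : ℝ) = (r : ℝ) * (p.1 : ℝ) + c := Iff.rfl

/-- Restriction: if an entry of `I_{n,m}` is uniquely solvable in the wider grid
`I_{n+1,m}`, it is uniquely solvable in `I_{n,m}`. -/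
lemma restrictX (n m : ℕ) (T : Set Slope) (p : ℤ × ℤ) (hp : p.1 ≤ (n : ℤ))
    (h : UniqSolv (n + 1) m T p) : UniqSolv n m T p := by
  intro f g hfg
  classical
  have key : ClueEquiv (n + 1) m T f
      (fun q => if q.1 = (n : ℤ) + 1 then f q else g q) := by
    intro s hs c
    have hsmall := hfg s hs c
    rw [clueSum_eq, clueSum_eq] at hsmall
    rw [clueSum_eq, clueSum_eq]
    set P := lineP s c with hPdef
    have hAB : (Finset.Icc (1 : ℤ) ((n : ℕ) : ℤ) ×ˢ Finset.Icc (1 : ℤ) ((m : ℕ) : ℤ)).filter P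
        ⊆ (Finset.Icc (1 : ℤ) (((n + 1 : ℕ)) : ℤ) ×ˢ
            Finset.Icc (1 : ℤ) ((m : ℕ) : ℤ)).filter P := by
      intro q hq
      simp only [Finset.mem_filter, Finset.mem_product, Finset.mem_Icc] at hq ⊢
      push_cast
      push_cast at hq
      exact ⟨⟨⟨hq.1.1.1, by linarith [hq.1.1.2]⟩, hq.1.2⟩, hq.2⟩
    rw [← Finset.sum_sdiff hAB, ← Finset.sum_sdiff hAB (f := fun q =>
      if q.1 = (n : ℤ) + 1 then f q else g q)]
    have hdiff : ∀ q ∈ (Finset.Icc (1 : ℤ) (((n + 1 : ℕ)) : ℤ) ×ˢ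
        Finset.Icc (1 : ℤ) ((m : ℕ) : ℤ)).filter P \
        (Finset.Icc (1 : ℤ) ((n : ℕ) : ℤ) ×ˢ Finset.Icc (1 : ℤ) ((m : ℕ) : ℤ)).filter P,
        q.1 = (n : ℤ) + 1 := by
      intro q hq
      rw [Finset.mem_sdiff] at hq
      obtain ⟨hqB, hqA⟩ := hq
      simp only [Finset.mem_filter, Finset.mem_product, Finset.mem_Icc] at hqB hqA
      push_cast at hqB
      by_contra hne
      exact hqA ⟨⟨⟨hqB.1.1.1, by omega⟩, hqB.1.2⟩, hqB.2⟩
    have e1 : ∑ q ∈ (Finset.Icc (1 : ℤ) (((n + 1 : ℕ)) : ℤ) ×ˢ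
        Finset.Icc (1 : ℤ) ((m : ℕ) : ℤ)).filter P \
        (Finset.Icc (1 : ℤ) ((n : ℕ) : ℤ) ×ˢ Finset.Icc (1 : ℤ) ((m : ℕ) : ℤ)).filter P,
        f q = ∑ q ∈ (Finset.Icc (1 : ℤ) (((n + 1 : ℕ)) : ℤ) ×ˢ
        Finset.Icc (1 : ℤ) ((m : ℕ) : ℤ)).filter P \
        (Finset.Icc (1 : ℤ) ((n : ℕ) : ℤ) ×ˢ Finset.Icc (1 : ℤ) ((m : ℕ) : ℤ)).filter P,
        (if q.1 = (n : ℤ) + 1 then f q else g q) :=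
      Finset.sum_congr rfl fun q hq => by simp [hdiff q hq]
    have e2 : ∑ q ∈ (Finset.Icc (1 : ℤ) ((n : ℕ) : ℤ) ×ˢ
        Finset.Icc (1 : ℤ) ((m : ℕ) : ℤ)).filter P,
        (if q.1 = (n : ℤ) + 1 then f q else g q) = ∑ q ∈ (Finset.Icc (1 : ℤ) ((n : ℕ) : ℤ) ×ˢ
        Finset.Icc (1 : ℤ) ((m : ℕ) : ℤ)).filter P, g q := by
      refine Finset.sum_congr rfl fun q hq => ?_
      have hq1 : q.1 ≤ (n : ℤ) := by
        simp only [Finset.mem_filter, Finset.mem_product, Finset.mem_Icc] at hq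
        exact hq.1.1.2
      rw [if_neg (by omega)]
    rw [e1, e2, hsmall]
  have hfp := h f _ key
  rw [hfp, if_neg (by omega : ¬ p.1 = (n : ℤ) + 1)]

/-- Restriction: if an entry of `I_{n,m}` is uniquely solvable in the taller grid
`I_{n,m+1}`, it is uniquely solvable in `I_{n,m}`. -/
lemma restrictY (n m : ℕ) (T : Set Slope) (p : ℤ × ℤ) (hp : p.2 ≤ (m : ℤ))
    (h : UniqSolv n (m + 1) T p) : UniqSolv n m T p := by
  intro f g hfg
  classical
  have key : ClueEquiv n (m + 1) T f
      (fun q => if q.2 = (m : ℤ) + 1 then f q else g q) := by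
    intro s hs c
    have hsmall := hfg s hs c
    rw [clueSum_eq, clueSum_eq] at hsmall
    rw [clueSum_eq, clueSum_eq]
    set P := lineP s c with hPdef
    have hAB : (Finset.Icc (1 : ℤ) ((n : ℕ) : ℤ) ×ˢ Finset.Icc (1 : ℤ) ((m : ℕ) : ℤ)).filter P
        ⊆ (Finset.Icc (1 : ℤ) ((n : ℕ) : ℤ) ×ˢ
            Finset.Icc (1 : ℤ) (((m + 1 : ℕ)) : ℤ)).filter P := by
      intro q hq
      simp only [Finset.mem_filter, Finset.mem_product, Finset.mem_Icc] at hq ⊢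
      push_cast
      push_cast at hq
      exact ⟨⟨hq.1.1, ⟨hq.1.2.1, by linarith [hq.1.2.2]⟩⟩, hq.2⟩
    rw [← Finset.sum_sdiff hAB, ← Finset.sum_sdiff hAB (f := fun q =>
      if q.2 = (m : ℤ) + 1 then f q else g q)]
    have hdiff : ∀ q ∈ (Finset.Icc (1 : ℤ) ((n : ℕ) : ℤ) ×ˢ
        Finset.Icc (1 : ℤ) (((m + 1 : ℕ)) : ℤ)).filter P \
        (Finset.Icc (1 : ℤ) ((n : ℕ) : ℤ) ×ˢ Finset.Icc (1 : ℤ) ((m : ℕ) : ℤ)).filter P,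
        q.2 = (m : ℤ) + 1 := by
      intro q hq
      rw [Finset.mem_sdiff] at hq
      obtain ⟨hqB, hqA⟩ := hq
      simp only [Finset.mem_filter, Finset.mem_product, Finset.mem_Icc] at hqB hqA
      push_cast at hqB
      by_contra hne
      exact hqA ⟨⟨hqB.1.1, ⟨hqB.1.2.1, by omega⟩⟩, hqB.2⟩
    have e1 : ∑ q ∈ (Finset.Icc (1 : ℤ) ((n : ℕ) : ℤ) ×ˢ
        Finset.Icc (1 : ℤ) (((m + 1 : ℕ)) : ℤ)).filter P \
        (Finset.Icc (1 : ℤ) ((n : ℕ) : ℤ) ×ˢ Finset.Icc (1 : ℤ) ((m : ℕ) : ℤ)).filter P,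
        f q = ∑ q ∈ (Finset.Icc (1 : ℤ) ((n : ℕ) : ℤ) ×ˢ
        Finset.Icc (1 : ℤ) (((m + 1 : ℕ)) : ℤ)).filter P \
        (Finset.Icc (1 : ℤ) ((n : ℕ) : ℤ) ×ˢ Finset.Icc (1 : ℤ) ((m : ℕ) : ℤ)).filter P,
        (if q.2 = (m : ℤ) + 1 then f q else g q) :=
      Finset.sum_congr rfl fun q hq => by simp [hdiff q hq]
    have e2 : ∑ q ∈ (Finset.Icc (1 : ℤ) ((n : ℕ) : ℤ) ×ˢ
        Finset.Icc (1 : ℤ) ((m : ℕ) : ℤ)).filter P,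
        (if q.2 = (m : ℤ) + 1 then f q else g q) = ∑ q ∈ (Finset.Icc (1 : ℤ) ((n : ℕ) : ℤ) ×ˢ
        Finset.Icc (1 : ℤ) ((m : ℕ) : ℤ)).filter P, g q := by
      refine Finset.sum_congr rfl fun q hq => ?_
      have hq2 : q.2 ≤ (m : ℤ) := by
        simp only [Finset.mem_filter, Finset.mem_product, Finset.mem_Icc] at hq
        exact hq.1.2.2
      rw [if_neg (by omega)]
    rw [e1, e2, hsmall]
  have hfp := h f _ key
  rw [hfp, if_neg (by omega : ¬ p.2 = (m : ℤ) + 1)]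

/-- Reflection in `x` transforms clues of slope `s` into clues of slope `-s`. -/
lemma reflX_clue (n m : ℕ) (s : Slope) (c : ℝ) :
    ∃ c' : ℝ, ∀ f : ℤ × ℤ → ℝ,
      clueSum n m s c (fun p => f ((n : ℤ) + 1 - p.1, p.2)) =
        clueSum n m (negS s) c' f := by
  classical
  cases s with
  | none =>
    refine ⟨(n : ℝ) + 1 - c, fun f => ?_⟩
    unfold clueSum negS
    simp only [Option.map_none]
    refine Finset.sum_nbij' (fun p => ((n : ℤ) + 1 - p.1, p.2))
      (fun p => ((n : ℤ) + 1 - p.1, p.2)) ?_ ?_ ?_ ?_ ?_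
    · intro q hq
      simp only [Finset.mem_filter, Finset.mem_product, Finset.mem_Icc] at hq ⊢
      refine ⟨⟨by omega, hq.1.2⟩, ?_⟩
      push_cast
      push_cast at hq
      linarith [hq.2]
    · intro q hq
      simp only [Finset.mem_filter, Finset.mem_product, Finset.mem_Icc] at hq ⊢
      refine ⟨⟨by omega, hq.1.2⟩, ?_⟩
      push_cast
      push_cast at hq
      linarith [hq.2]
    · intro q _; simp
    · intro q _; simp
    · intro q _; rfl
  | some r =>
    refine ⟨c + (r : ℝ) * ((n : ℝ) + 1), fun f => ?_⟩
    unfold clueSum negS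
    simp only [Option.map_some]
    refine Finset.sum_nbij' (fun p => ((n : ℤ) + 1 - p.1, p.2))
      (fun p => ((n : ℤ) + 1 - p.1, p.2)) ?_ ?_ ?_ ?_ ?_
    · intro q hq
      simp only [Finset.mem_filter, Finset.mem_product, Finset.mem_Icc] at hq ⊢
      refine ⟨⟨by omega, hq.1.2⟩, ?_⟩
      push_cast
      push_cast at hq
      linarith [hq.2]
    · intro q hq
      simp only [Finset.mem_filter, Finset.mem_product, Finset.mem_Icc] at hq ⊢
      refine ⟨⟨by omega, hq.1.2⟩, ?_⟩
      push_cast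
      push_cast at hq
      linarith [hq.2]
    · intro q _; simp
    · intro q _; simp
    · intro q _; rfl

/-- Reflection in `y` transforms clues of slope `s` into clues of slope `-s`. -/
lemma reflY_clue (n m : ℕ) (s : Slope) (c : ℝ) :
    ∃ c' : ℝ, ∀ f : ℤ × ℤ → ℝ,
      clueSum n m s c (fun p => f (p.1, (m : ℤ) + 1 - p.2)) =
        clueSum n m (negS s) c' f := by
  classical
  cases s with
  | none =>
    refine ⟨c, fun f => ?_⟩
    unfold clueSum negS
    simp only [Option.map_none]
    refine Finset.sum_nbij' (fun p => (p.1, (m : ℤ) + 1 - p.2))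
      (fun p => (p.1, (m : ℤ) + 1 - p.2)) ?_ ?_ ?_ ?_ ?_
    · intro q hq
      simp only [Finset.mem_filter, Finset.mem_product, Finset.mem_Icc] at hq ⊢
      exact ⟨⟨hq.1.1, by omega⟩, hq.2⟩
    · intro q hq
      simp only [Finset.mem_filter, Finset.mem_product, Finset.mem_Icc] at hq ⊢
      exact ⟨⟨hq.1.1, by omega⟩, hq.2⟩
    · intro q _; simp
    · intro q _; simp
    · intro q _; rfl
  | some r =>
    refine ⟨(m : ℝ) + 1 - c, fun f => ?_⟩
    unfold clueSum negS
    simp only [Option.map_some]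
    refine Finset.sum_nbij' (fun p => (p.1, (m : ℤ) + 1 - p.2))
      (fun p => (p.1, (m : ℤ) + 1 - p.2)) ?_ ?_ ?_ ?_ ?_
    · intro q hq
      simp only [Finset.mem_filter, Finset.mem_product, Finset.mem_Icc] at hq ⊢
      refine ⟨⟨hq.1.1, by omega⟩, ?_⟩
      push_cast
      push_cast at hq
      linarith [hq.2]
    · intro q hq
      simp only [Finset.mem_filter, Finset.mem_product, Finset.mem_Icc] at hq ⊢
      refine ⟨⟨hq.1.1, by omega⟩, ?_⟩
      push_cast
      push_cast at hq
      linarith [hq.2]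
    · intro q _; simp
    · intro q _; simp
    · intro q _; rfl

lemma uniq_reflX (n m : ℕ) (T : Set Slope) (p : ℤ × ℤ)
    (h : UniqSolv n m T p) : UniqSolv n m (negS '' T) ((n : ℤ) + 1 - p.1, p.2) := by
  intro f g hfg
  exact h (fun q => f ((n : ℤ) + 1 - q.1, q.2)) (fun q => g ((n : ℤ) + 1 - q.1, q.2))
    (by
      intro s hs c
      obtain ⟨c', hc'⟩ := reflX_clue n m s c
      rw [hc' f, hc' g]
      exact hfg (negS s) ⟨s, hs, rfl⟩ c')

lemma uniq_reflY (n m : ℕ) (T : Set Slope) (p : ℤ × ℤ)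
    (h : UniqSolv n m T p) : UniqSolv n m (negS '' T) (p.1, (m : ℤ) + 1 - p.2) := by
  intro f g hfg
  exact h (fun q => f (q.1, (m : ℤ) + 1 - q.2)) (fun q => g (q.1, (m : ℤ) + 1 - q.2))
    (by
      intro s hs c
      obtain ⟨c', hc'⟩ := reflY_clue n m s c
      rw [hc' f, hc' g]
      exact hfg (negS s) ⟨s, hs, rfl⟩ c')

/-- A steep enough slope belongs to a suitable `CSet` and isolates every grid point,
so that every entry becomes uniquely solvable. -/
lemma exists_all_solv (n m : ℕ) : ∃ a : ℕ, ∀ p : ℤ × ℤ,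
    1 ≤ p.1 → p.1 ≤ (n : ℤ) → 1 ≤ p.2 → p.2 ≤ (m : ℤ) → UniqSolv n m (CSet a) p := by
  classical
  refine ⟨4 * m + 7, fun p hp1 hp2 hp3 hp4 => ?_⟩
  have hsig : sigmaSlope (4 * m + 7) = some (((m : ℚ) + 2)) := by
    have h7 : 4 * m + 7 = (4 * m + 3) + 4 := by omega
    rw [h7]
    have h1 : (4 * m + 3) % 4 = 3 := by omega
    have h2 : (4 * m + 3) / 4 = m := by omega
    simp [sigmaSlope, h1, h2]
  have hmem : (some ((m : ℚ) + 2) : Slope) ∈ CSet (4 * m + 7) :=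
    ⟨4 * m + 7, by simp, hsig⟩
  intro f g hfg
  have hclue := hfg _ hmem ((p.2 : ℝ) - ((m : ℝ) + 2) * (p.1 : ℝ))
  unfold clueSum at hclue
  have hset : ∀ P : Finset (ℤ × ℤ), P = (Finset.Icc (1 : ℤ) (n : ℤ) ×ˢ
      Finset.Icc (1 : ℤ) (m : ℤ)).filter (fun q => ((q.2 : ℝ) =
        (((m : ℚ) + 2 : ℚ) : ℝ) * (q.1 : ℝ) + ((p.2 : ℝ) - ((m : ℝ) + 2) * (p.1 : ℝ)))) →
      P = {p} := by
    intro P hPdef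
    rw [hPdef]
    ext q
    simp only [Finset.mem_filter, Finset.mem_product, Finset.mem_Icc, Finset.mem_singleton]
    constructor
    · rintro ⟨⟨⟨hq1, hq2⟩, hq3, hq4⟩, hline⟩
      have hline' : (q.2 : ℝ) - (p.2 : ℝ) = ((m : ℝ) + 2) * ((q.1 : ℝ) - (p.1 : ℝ)) := by
        push_cast at hline
        linarith
      have hZ : q.2 - p.2 = ((m : ℤ) + 2) * (q.1 - p.1) := by
        exact_mod_cast hline'
      have hd : q.1 = p.1 := by
        by_contra hne
        have h1 : 1 ≤ q.1 - p.1 ∨ q.1 - p.1 ≤ -1 := by omega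
        rcases h1 with h1 | h1
        · have : (m : ℤ) + 2 ≤ q.2 - p.2 := by nlinarith [hZ, h1]
          omega
        · have : q.2 - p.2 ≤ -((m : ℤ) + 2) := by nlinarith [hZ, h1]
          omega
      have hd2 : q.2 = p.2 := by
        rw [hd] at hZ
        simp at hZ
        omega
      exact Prod.ext hd hd2
    · rintro rfl
      refine ⟨⟨⟨hp1, hp2⟩, hp3, hp4⟩, ?_⟩
      push_cast
      ring
  rw [hset _ rfl] at hclue
  simpa using hclue

lemma sInf_le_of_subset {A B : Set ℕ} (hBA : B ⊆ A) (hB : B.Nonempty) :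
    sInf A ≤ sInf B :=
  Nat.sInf_le (hBA (Nat.sInf_mem hB))

lemma rowOK_all (n m : ℕ) (hm : 0 < m) : ∃ a, RowOK n m a := by
  obtain ⟨a, ha⟩ := exists_all_solv n m
  exact ⟨a, Or.inl fun i h1 h2 => ha (i, 1) h1 h2 le_rfl (by omega)⟩

lemma colOK_all (n m : ℕ) (hn : 0 < n) : ∃ a, ColOK n m a := by
  obtain ⟨a, ha⟩ := exists_all_solv n m
  exact ⟨a, Or.inl fun j h1 h2 => ha (1, j) le_rfl (by omega) h1 h2⟩

lemma uniq_reflX' (n m : ℕ) (T : Set Slope) (i j : ℤ) (h : UniqSolv n m T (i, j)) :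
    UniqSolv n m (negS '' T) ((n : ℤ) + 1 - i, j) :=
  uniq_reflX n m T (i, j) h

lemma uniq_reflY' (n m : ℕ) (T : Set Slope) (i j : ℤ) (h : UniqSolv n m T (i, j)) :
    UniqSolv n m (negS '' T) (i, (m : ℤ) + 1 - j) :=
  uniq_reflY n m T (i, j) h

lemma rowOK_of_succX (n m a : ℕ) (h : RowOK (n + 1) m a) : RowOK n m a := by
  rcases h with h | h
  · exact Or.inl fun i h1 h2 => restrictX n m _ (i, 1) h2 (h i h1 (by omega))
  · exact Or.inr fun i h1 h2 => restrictX n m _ (i, (m : ℤ)) h2 (h i h1 (by omega))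

lemma colOK_of_succX (n m a : ℕ) (hn : 0 < n) (h : ColOK (n + 1) m a) : ColOK n m a := by
  rcases h with h | h
  · exact Or.inl fun j h1 h2 => restrictX n m _ (1, j) (by omega) (h j h1 h2)
  · refine Or.inr fun j h1 h2 => ?_
    have h0 := h j h1 h2
    have h4 := uniq_reflX' n m _ _ j (restrictX n m _ _ (by push_cast; omega)
      (uniq_reflX' (n + 1) m _ _ j h0))
    rw [negS_image_image] at h4
    convert h4 using 2
    push_cast
    ring

lemma rowOK_of_succY (n m a : ℕ) (hm : 0 < m) (h : RowOK n (m + 1) a) : RowOK n m a := by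
  rcases h with h | h
  · exact Or.inl fun i h1 h2 => restrictY n m _ (i, 1) (by omega) (h i h1 h2)
  · refine Or.inr fun i h1 h2 => ?_
    have h0 := h i h1 h2
    have h4 := uniq_reflY' n m _ i _ (restrictY n m _ _ (by push_cast; omega)
      (uniq_reflY' n (m + 1) _ i _ h0))
    rw [negS_image_image] at h4
    convert h4 using 2
    push_cast
    ring

lemma colOK_of_succY (n m a : ℕ) (h : ColOK n (m + 1) a) : ColOK n m a := by
  rcases h with h | h
  · exact Or.inl fun j h1 h2 => restrictY n m _ (1, j) h2 (h j h1 (by omega))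
  · exact Or.inr fun j h1 h2 => restrictY n m _ ((n : ℤ), j) h2 (h j h1 (by omega))

/-- `s_{n,m} ⪯ s_{n+1,m}` and `s_{n,m} ⪯ s_{n,m+1}` (comparison in the order
`⪯` is comparison of indices in the enumeration `σ`). -/
theorem sInv_mono (n m : ℕ) (hn : 0 < n) (hm : 0 < m) :
    sInv n m ≤ sInv (n + 1) m ∧ sInv n m ≤ sInv n (m + 1) := by
  unfold sInv rInv cInv
  refine ⟨min_le_min ?_ ?_, min_le_min ?_ ?_⟩
  · exact sInf_le_of_subset (fun a ha => rowOK_of_succX n m a ha) (rowOK_all (n + 1) m hm)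
  · exact sInf_le_of_subset (fun a ha => colOK_of_succX n m a hn ha)
      (colOK_all (n + 1) m (by omega))
  · exact sInf_le_of_subset (fun a ha => rowOK_of_succY n m a hm ha)
      (rowOK_all n (m + 1) (by omega))
  · exact sInf_le_of_subset (fun a ha => colOK_of_succY n m a ha) (colOK_all n (m + 1) hn)
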